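/- Let G be a finite connected simple graph and let x be a cut vertex of G. Then there exists a maximum mutual-visibility set S of the strong prism G ⊠ P_2 that contains at most one of the two copies of x (i.e., at most one of the vertices (x,p), (x,q), where p, q are the two vertices of P_2). -/

import Mathlib

open SimpleGraph

/-- Vertices `x` and `y` are `X`-visible in `G`: some shortest `x,y`-path has
no internal vertex in `X`. -/
def Visible {V : Type*} (G : SimpleGraph V) (X : Set V) (x y : V) : Prop :=
  ∃ p : G.Walk x y, p.length = G.dist x y ∧ ∀ v ∈ p.support, v ∈ X → v = x ∨ v = y

/-- `X` is a mutual-visibility set of `G`: every two vertices of `X` are `X`-visible. -/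
def IsMVSet {V : Type*} (G : SimpleGraph V) (X : Set V) : Prop :=
  ∀ x ∈ X, ∀ y ∈ X, Visible G X x y

/-- `X` is a total mutual-visibility set of `G`: every two vertices of `G` are
`X`-visible. -/
def IsTMVSet {V : Type*} (G : SimpleGraph V) (X : Set V) : Prop :=
  ∀ x y : V, Visible G X x y

/-- The mutual-visibility number of `G`: the maximum cardinality of a
mutual-visibility set. -/
noncomputable def mu {V : Type*} (G : SimpleGraph V) : ℕ :=
  sSup {n | ∃ X : Set V, IsMVSet G X ∧ X.ncard = n}

/-- The total mutual-visibility number of `G`: the maximum cardinality of a total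
mutual-visibility set. -/
noncomputable def muT {V : Type*} (G : SimpleGraph V) : ℕ :=
  sSup {n | ∃ X : Set V, IsTMVSet G X ∧ X.ncard = n}

/-- A feasible total mutual-visibility set: a total mutual-visibility set `S` such that
any two adjacent vertices of `S` have a common neighbor outside `S`. -/
def IsFeasibleTMVSet {V : Type*} (G : SimpleGraph V) (S : Set V) : Prop :=
  IsTMVSet G S ∧ ∀ x ∈ S, ∀ y ∈ S, G.Adj x y → ∃ z ∉ S, G.Adj x z ∧ G.Adj y z

/-- The strong product of two simple graphs. -/
def strongProd {α β : Type*} (G : SimpleGraph α) (H : SimpleGraph β) :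
    SimpleGraph (α × β) where
  Adj x y := (G.Adj x.1 y.1 ∧ x.2 = y.2) ∨ (x.1 = y.1 ∧ H.Adj x.2 y.2) ∨
    (G.Adj x.1 y.1 ∧ H.Adj x.2 y.2)
  symm := by
    constructor
    rintro ⟨a, b⟩ ⟨c, d⟩ (⟨h1, h2⟩ | ⟨h1, h2⟩ | ⟨h1, h2⟩)
    · exact Or.inl ⟨h1.symm, h2.symm⟩
    · exact Or.inr (Or.inl ⟨h1.symm, h2.symm⟩)
    · exact Or.inr (Or.inr ⟨h1.symm, h2.symm⟩)
  loopless := by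
    constructor
    rintro ⟨a, b⟩ (⟨h, _⟩ | ⟨_, h⟩ | ⟨h, _⟩)
    · exact G.loopless.irrefl a h
    · exact H.loopless.irrefl b h
    · exact G.loopless.irrefl a h

/-- The iterated (associative) strong product of a finite family of graphs:
two tuples are adjacent iff they are distinct and agree or are adjacent in every
coordinate. -/
def strongProdPi {k : ℕ} {V : Fin k → Type*} (G : ∀ i, SimpleGraph (V i)) :
    SimpleGraph (∀ i, V i) where
  Adj x y := x ≠ y ∧ ∀ i, x i = y i ∨ (G i).Adj (x i) (y i)
  symm := by
    constructor
    rintro x y ⟨hne, h⟩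
    exact ⟨hne.symm, fun i => (h i).imp Eq.symm fun hh => (G i).symm.symm _ _ hh⟩
  loopless := ⟨fun x h => h.1 rfl⟩

/-- A universal vertex: adjacent to all other vertices. -/
def IsUniversal {V : Type*} (G : SimpleGraph V) (v : V) : Prop :=
  ∀ u : V, u ≠ v → G.Adj v u

/-- A cut vertex: its removal disconnects the graph. -/
def IsCutVertex {V : Type*} (G : SimpleGraph V) (v : V) : Prop :=
  ¬ (G.induce ({v}ᶜ : Set V)).Preconnected

/-- An induced path: a path with no chords between its vertices. -/
def IsInducedPath {V : Type*} (G : SimpleGraph V) {u v : V} (p : G.Walk u v) : Prop :=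
  p.IsPath ∧ ∀ a b : V, a ∈ p.support → b ∈ p.support → G.Adj a b → s(a, b) ∈ p.edges

/-- A block graph: a connected graph in which every pair of vertices is joined
by a unique induced path. -/
def IsBlockGraph {V : Type*} (G : SimpleGraph V) : Prop :=
  G.Connected ∧ ∀ u v : V, ∃! p : G.Walk u v, IsInducedPath G p

/-- A convex set of vertices: every shortest path of `G` between two of its
vertices stays inside the set. -/
def IsConvexSet {V : Type*} (G : SimpleGraph V) (A : Set V) : Prop :=
  ∀ x ∈ A, ∀ y ∈ A, ∀ p : G.Walk x y, p.length = G.dist x y → ∀ v ∈ p.support, v ∈ A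

/-- A cactus graph: a connected graph in which every edge lies in at most one cycle,
i.e. two cycles sharing an edge have the same edge set. -/
def IsCactus {V : Type*} (G : SimpleGraph V) : Prop :=
  G.Connected ∧ ∀ (v : V) (p q : G.Walk v v), p.IsCycle → q.IsCycle →
    ∀ e, e ∈ p.edges → e ∈ q.edges → ∀ e', e' ∈ p.edges ↔ e' ∈ q.edges

/-- A cograph: obtained from a single vertex by repeatedly adding twins, i.e. there is
an enumeration of the vertices in which every vertex except the first is, at the
moment of its addition, a (true or false) twin of some earlier vertex in the induced
subgraph on the vertices added so far. -/
def IsCograph {V : Type*} (G : SimpleGraph V) : Prop :=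
  ∃ l : List V, l.Nodup ∧ (∀ v : V, v ∈ l) ∧
    ∀ i : Fin l.length, (i : ℕ) ≠ 0 →
      ∃ j : Fin l.length, (j : ℕ) < (i : ℕ) ∧
        ∀ z ∈ l.take ((i : ℕ) + 1), z ≠ l.get i → z ≠ l.get j →
          (G.Adj (l.get i) z ↔ G.Adj (l.get j) z)

/-- An enabling vertex: a vertex `v` adjacent to every vertex `u` of `G - v` whose
degree in `G - v` is less than `n(G) - 2`. -/
def IsEnabling {V : Type*} [Fintype V] (G : SimpleGraph V) (v : V) : Prop :=
  ∀ u : V, u ≠ v → (G.neighborSet u \ {v}).ncard < Fintype.card V - 2 → G.Adj v u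

section StrongPrismAux

open SimpleGraph Walk

variable {V : Type*} {G : SimpleGraph V}

private lemma P2_adj {i j : Fin 2} (h : i ≠ j) : (SimpleGraph.pathGraph 2).Adj i j := by
  rw [pathGraph_two_eq_top]; simpa using h

private lemma visible_symm {X : Set (V)} {a b : V} (h : Visible G X a b) :
    Visible G X b a := by
  obtain ⟨p, hl, hs⟩ := h
  refine ⟨p.reverse, by rwa [Walk.length_reverse, dist_comm], fun v hv hvX => ?_⟩
  rw [Walk.support_reverse, List.mem_reverse] at hv
  exact (hs v hv hvX).symm

/-- Projection of a walk in the strong prism to `G`. -/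
private lemma proj_walk {a b : V × Fin 2}
    (p : (strongProd G (SimpleGraph.pathGraph 2)).Walk a b) :
    ∃ q : G.Walk a.1 b.1, q.length ≤ p.length ∧
      (∀ z ∈ p.support, z.1 ∈ q.support) ∧
      (∀ w ∈ q.support, ∃ k, (w, k) ∈ p.support) := by
  induction p with
  | nil =>
    rename_i u
    refine ⟨Walk.nil, by simp, by simp, fun w hw => ⟨u.2, ?_⟩⟩
    simp only [Walk.support_nil, List.mem_singleton] at hw ⊢
    subst hw; rfl
  | @cons a c b h p ih =>
    obtain ⟨q, hlen, hfwd, hbwd⟩ := ih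
    have hcase : G.Adj a.1 c.1 ∨ a.1 = c.1 := by
      rcases h with ⟨h1, _⟩ | ⟨h1, _⟩ | ⟨h1, _⟩
      exacts [Or.inl h1, Or.inr h1, Or.inl h1]
    rcases hcase with h1 | h1
    · refine ⟨Walk.cons h1 q, by simpa using Nat.add_le_add_right hlen 1, ?_, ?_⟩
      · intro z hz
        rcases List.mem_cons.mp (by simpa using hz) with hz | hz
        · subst hz; simp
        · simp only [Walk.support_cons, List.mem_cons]
          exact Or.inr (hfwd z hz)
      · intro w hw
        rcases List.mem_cons.mp (by simpa using hw) with hw | hw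
        · subst hw
          exact ⟨a.2, by rw [Walk.support_cons]; exact List.mem_cons_self⟩
        · obtain ⟨k, hk⟩ := hbwd w hw
          exact ⟨k, by simp [hk]⟩
    · refine ⟨q.copy h1.symm rfl, by simpa using Nat.le_succ_of_le hlen, ?_, ?_⟩
      · intro z hz
        rcases List.mem_cons.mp (by simpa using hz) with hz | hz
        · subst hz; rw [Walk.support_copy, h1]; exact q.start_mem_support
        · rw [Walk.support_copy]; exact hfwd z hz
      · intro w hw
        rw [Walk.support_copy] at hw
        obtain ⟨k, hk⟩ := hbwd w hw
        exact ⟨k, by simp [hk]⟩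

private lemma lift_same {u v : V} (q : G.Walk u v) (i : Fin 2) :
    ∃ p : (strongProd G (SimpleGraph.pathGraph 2)).Walk (u, i) (v, i),
      p.length = q.length := by
  induction q with
  | nil => exact ⟨Walk.nil, rfl⟩
  | cons h q ih =>
    obtain ⟨p, hp⟩ := ih
    refine ⟨Walk.cons ?_ p, ?_⟩
    · exact Or.inl ⟨h, rfl⟩
    · exact congrArg (· + 1) hp

private lemma lift_ne {u v : V} (q : G.Walk u v) {i j : Fin 2} (hij : i ≠ j)
    (hq : q.length ≠ 0) :
    ∃ p : (strongProd G (SimpleGraph.pathGraph 2)).Walk (u, i) (v, j),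
      p.length = q.length := by
  cases q with
  | nil => simp at hq
  | cons h q' =>
    obtain ⟨p, hp⟩ := lift_same q' j
    refine ⟨Walk.cons ?_ p, ?_⟩
    · exact Or.inr (Or.inr ⟨h, P2_adj hij⟩)
    · exact congrArg (· + 1) hp

private lemma H_reach (hG : G.Connected) (a b : V × Fin 2) :
    (strongProd G (SimpleGraph.pathGraph 2)).Reachable a b := by
  obtain ⟨u, i⟩ := a
  obtain ⟨v, j⟩ := b
  obtain ⟨q⟩ := hG.preconnected u v
  by_cases huv : u = v
  · subst huv
    by_cases hij : i = j
    · subst hij; exact Reachable.refl _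
    · exact (SimpleGraph.Adj.reachable (Or.inr (Or.inl ⟨rfl, P2_adj hij⟩)))
  · have hq0 : q.length ≠ 0 := fun h0 => huv (Walk.eq_of_length_eq_zero h0)
    by_cases hij : i = j
    · subst hij; obtain ⟨p, _⟩ := lift_same q i; exact ⟨p⟩
    · obtain ⟨p, _⟩ := lift_ne q hij hq0; exact ⟨p⟩

private lemma H_conn (hG : G.Connected) :
    (strongProd G (SimpleGraph.pathGraph 2)).Connected := by
  have : Nonempty V := hG.nonempty
  exact (connected_iff _).mpr ⟨fun a b => H_reach hG a b, inferInstance⟩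

private lemma H_dist (hG : G.Connected) {u v : V} (huv : u ≠ v) (i j : Fin 2) :
    (strongProd G (SimpleGraph.pathGraph 2)).dist (u, i) (v, j) = G.dist u v := by
  apply le_antisymm
  · obtain ⟨q, hq⟩ := hG.exists_walk_length_eq_dist u v
    have hq0 : q.length ≠ 0 := fun h0 => huv (Walk.eq_of_length_eq_zero h0)
    by_cases hij : i = j
    · subst hij
      obtain ⟨p, hp⟩ := lift_same q i
      calc (strongProd G (SimpleGraph.pathGraph 2)).dist (u, i) (v, i) ≤ p.length :=
            SimpleGraph.dist_le p
        _ = G.dist u v := by rw [hp, hq]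
    · obtain ⟨p, hp⟩ := lift_ne q hij hq0
      calc (strongProd G (SimpleGraph.pathGraph 2)).dist (u, i) (v, j) ≤ p.length :=
            SimpleGraph.dist_le p
        _ = G.dist u v := by rw [hp, hq]
  · obtain ⟨p, hp⟩ := (H_reach hG (u, i) (v, j)).exists_walk_length_eq_dist
    obtain ⟨q, hlen, _, _⟩ := proj_walk p
    calc G.dist u v ≤ q.length := SimpleGraph.dist_le q
      _ ≤ p.length := hlen
      _ = _ := hp

/-- `Rch G x u v`: `u` and `v` are both distinct from `x` and connected in `G - x`. -/
private def Rch (G : SimpleGraph V) (x u v : V) : Prop :=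
  ∃ (hu : u ∈ ({x}ᶜ : Set V)) (hv : v ∈ ({x}ᶜ : Set V)),
    (G.induce ({x}ᶜ : Set V)).Reachable ⟨u, hu⟩ ⟨v, hv⟩

private lemma Rch.ne_left {x u v : V} (h : Rch G x u v) : u ≠ x :=
  Set.mem_compl_singleton_iff.mp h.1

private lemma Rch.ne_right {x u v : V} (h : Rch G x u v) : v ≠ x :=
  Set.mem_compl_singleton_iff.mp h.2.1

private lemma Rch.symm {x u v : V} (h : Rch G x u v) : Rch G x v u := by
  obtain ⟨hu, hv, hr⟩ := h
  exact ⟨hv, hu, hr.symm⟩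

private lemma Rch.trans {x u v w : V} (h1 : Rch G x u v) (h2 : Rch G x v w) :
    Rch G x u w := by
  obtain ⟨hu, hv, hr1⟩ := h1
  obtain ⟨hv', hw, hr2⟩ := h2
  exact ⟨hu, hw, hr1.trans hr2⟩

private lemma Rch.refl {x u : V} (h : u ≠ x) : Rch G x u u :=
  ⟨Set.mem_compl_singleton_iff.mpr h, Set.mem_compl_singleton_iff.mpr h, Reachable.refl _⟩

private lemma Rch.adj {x u v : V} (h : G.Adj u v) (hu : u ≠ x) (hv : v ≠ x) :
    Rch G x u v :=
  ⟨Set.mem_compl_singleton_iff.mpr hu, Set.mem_compl_singleton_iff.mpr hv,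
    SimpleGraph.Adj.reachable h⟩

private lemma walk_transfer {x : V} {u v : V} (W : G.Walk u v) (hxW : x ∉ W.support)
    (hu : u ∈ ({x}ᶜ : Set V)) (hv : v ∈ ({x}ᶜ : Set V)) :
    (G.induce ({x}ᶜ : Set V)).Reachable ⟨u, hu⟩ ⟨v, hv⟩ := by
  induction W with
  | nil => exact Reachable.refl _
  | @cons a c b h W ih =>
    have hc : c ∈ ({x}ᶜ : Set V) := by
      intro hcx
      simp only [Set.mem_singleton_iff] at hcx
      subst hcx
      exact hxW (by simp [Walk.support_cons, W.start_mem_support])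
    have hxW' : x ∉ W.support := fun hmem => hxW (by simp [Walk.support_cons, hmem])
    exact (SimpleGraph.Adj.reachable (by exact h :
      (G.induce ({x}ᶜ : Set V)).Adj ⟨a, hu⟩ ⟨c, hc⟩)).trans (ih hxW' hc hv)

private lemma cross {x u v : V} (hu : u ≠ x) (hv : v ≠ x) (h : ¬ Rch G x u v)
    (W : G.Walk u v) : x ∈ W.support := by
  by_contra hxW
  exact h ⟨Set.mem_compl_singleton_iff.mpr hu, Set.mem_compl_singleton_iff.mpr hv,
    walk_transfer W hxW _ _⟩

private lemma dist_split [DecidableEq V] (hG : G.Connected) {x u v : V}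
    (hcross : ∀ W : G.Walk u v, x ∈ W.support) :
    G.dist u v = G.dist u x + G.dist x v := by
  apply le_antisymm (hG.dist_triangle)
  obtain ⟨q, hq⟩ := hG.exists_walk_length_eq_dist u v
  have hx := hcross q
  have h1 := SimpleGraph.dist_le (q.takeUntil x hx)
  have h2 := SimpleGraph.dist_le (q.dropUntil x hx)
  have h3 := congrArg Walk.length (q.take_spec hx)
  rw [Walk.length_append] at h3
  omega

private lemma geo_side [DecidableEq V] (hG : G.Connected) {x u v w : V} (q : G.Walk u v)
    (hq : q.length = G.dist u v) (hw : w ∈ q.support) (hwx : w ≠ x)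
    (hu : ∀ W : G.Walk u w, x ∈ W.support) (hv : ∀ W : G.Walk w v, x ∈ W.support) :
    False := by
  have hq12 : (q.takeUntil w hw).length + (q.dropUntil w hw).length = q.length := by
    have h3 := congrArg Walk.length (q.take_spec hw)
    rwa [Walk.length_append] at h3
  have hx1 : x ∈ (q.takeUntil w hw).support := hu _
  have hx2 : x ∈ (q.dropUntil w hw).support := hv _
  have hr1 : ((q.takeUntil w hw).dropUntil x hx1).length ≠ 0 := fun h0 =>
    hwx ((Walk.eq_of_length_eq_zero h0).symm)
  have ht2 : ((q.dropUntil w hw).takeUntil x hx2).length ≠ 0 := fun h0 =>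
    hwx (Walk.eq_of_length_eq_zero h0)
  have hs1 : ((q.takeUntil w hw).takeUntil x hx1).length +
      ((q.takeUntil w hw).dropUntil x hx1).length = (q.takeUntil w hw).length := by
    have h3 := congrArg Walk.length ((q.takeUntil w hw).take_spec hx1)
    rwa [Walk.length_append] at h3
  have hs2 : ((q.dropUntil w hw).takeUntil x hx2).length +
      ((q.dropUntil w hw).dropUntil x hx2).length = (q.dropUntil w hw).length := by
    have h3 := congrArg Walk.length ((q.dropUntil w hw).take_spec hx2)
    rwa [Walk.length_append] at h3
  have hd := SimpleGraph.dist_le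
    (((q.takeUntil w hw).takeUntil x hx1).append ((q.dropUntil w hw).dropUntil x hx2))
  rw [Walk.length_append] at hd
  omega

private lemma support_short {a b : V} (p : G.Walk a b) (hp : p.length ≤ 1) :
    ∀ z ∈ p.support, z = a ∨ z = b := by
  cases p with
  | nil => simp
  | cons h p' =>
    cases p' with
    | nil => intro z hz; simpa using hz
    | cons h' p'' => simp [Walk.length_cons] at hp

private lemma exists_nbr {x : V} : ∀ (n : ℕ) {u : V} (W : G.Walk u x), W.length = n →
    u ≠ x → ∃ b0, G.Adj x b0 ∧ Rch G x b0 u := by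
  intro n
  induction n with
  | zero => intro u W hl hu; exact absurd (Walk.eq_of_length_eq_zero hl) hu
  | succ n ih =>
    intro u W hl hu
    cases W with
    | nil => exact absurd rfl hu
    | cons h W' =>
      rename_i w
      by_cases hwx : w = x
      · subst hwx; exact ⟨u, h.symm, Rch.refl hu⟩
      · obtain ⟨b0, hb1, hb2⟩ := ih W' (by simp [Walk.length_cons] at hl; omega) hwx
        exact ⟨b0, hb1, hb2.trans (Rch.adj h.symm hwx hu)⟩

end StrongPrismAux

theorem stmt_15 {V : Type*} [Fintype V] (G : SimpleGraph V) (hG : G.Connected)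
    (x : V) (hx : IsCutVertex G x) :
    ∃ S : Set (V × Fin 2), IsMVSet (strongProd G (SimpleGraph.pathGraph 2)) S ∧
      S.ncard = mu (strongProd G (SimpleGraph.pathGraph 2)) ∧
      ¬ ((x, 0) ∈ S ∧ (x, 1) ∈ S) := by
  classical
  set H := strongProd G (SimpleGraph.pathGraph 2) with hH
  -- Step A : a maximum MV set exists
  have hempty : IsMVSet H (∅ : Set (V × Fin 2)) := fun a ha => absurd ha (Set.notMem_empty a)
  have hTne : (0 : ℕ) ∈ {n | ∃ X : Set (V × Fin 2), IsMVSet H X ∧ X.ncard = n} :=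
    ⟨∅, hempty, Set.ncard_empty _⟩
  have hbdd : BddAbove {n | ∃ X : Set (V × Fin 2), IsMVSet H X ∧ X.ncard = n} := by
    refine ⟨Fintype.card (V × Fin 2), fun n hn => ?_⟩
    obtain ⟨X, _, hX⟩ := hn
    calc n = X.ncard := hX.symm
      _ ≤ (Set.univ : Set (V × Fin 2)).ncard :=
          Set.ncard_le_ncard (Set.subset_univ X) Set.finite_univ
      _ = Fintype.card (V × Fin 2) := by rw [Set.ncard_univ, Nat.card_eq_fintype_card]
  have hmem := Nat.sSup_mem ⟨0, hTne⟩ hbdd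
  obtain ⟨Smax, hSmax, hScard⟩ := hmem
  by_cases hboth : ((x, 0) ∈ Smax ∧ (x, 1) ∈ Smax)
  swap
  · exact ⟨Smax, hSmax, hScard, hboth⟩
  obtain ⟨hx0, hx1⟩ := hboth
  -- Step C : two sides of G - x
  have hx' : ∃ a b : ({x}ᶜ : Set V), ¬ (G.induce ({x}ᶜ : Set V)).Reachable a b := by
    unfold IsCutVertex at hx
    simpa [SimpleGraph.Preconnected] using hx
  obtain ⟨a, b, hab⟩ := hx'
  have hax : (a : V) ≠ x := Set.mem_compl_singleton_iff.mp a.2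
  have hbx : (b : V) ≠ x := Set.mem_compl_singleton_iff.mp b.2
  have habR : ¬ Rch G x (a : V) (b : V) := by
    rintro ⟨h1, h2, hr⟩
    exact hab (by convert hr <;> exact rfl)
  -- Step D : all non-x coordinates of Smax are on one side
  have hAll : ∀ z ∈ Smax, ∀ w ∈ Smax, z.1 ≠ x → w.1 ≠ x → Rch G x z.1 w.1 := by
    intro z hz w hw hz1 hw1
    by_contra hn
    obtain ⟨p, hpl, hps⟩ := hSmax z hz w hw
    obtain ⟨q, _, _, hbwd⟩ := proj_walk p
    obtain ⟨k, hk⟩ := hbwd x (cross hz1 hw1 hn q)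
    have hkS : (x, k) ∈ Smax := by fin_cases k <;> assumption
    rcases hps (x, k) hk hkS with h | h
    · exact hz1 (by rw [← h])
    · exact hw1 (by rw [← h])
  -- choose side c opposite to Smax
  have hc : ∃ c : V, c ≠ x ∧ ∀ z ∈ Smax, z.1 ≠ x → ¬ Rch G x z.1 c := by
    by_cases h1 : ∀ z ∈ Smax, z.1 ≠ x → ¬ Rch G x z.1 (a : V)
    · exact ⟨a, hax, h1⟩
    · push_neg at h1
      obtain ⟨z0, hz0S, hz0x, hz0a⟩ := h1
      refine ⟨b, hbx, fun w hwS hwx hwb => ?_⟩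
      exact habR ((hz0a.symm.trans (hAll z0 hz0S w hwS hz0x hwx)).trans hwb)
  obtain ⟨c, hcx, hc⟩ := hc
  -- Step E : neighbor b0 of x on side of c
  obtain ⟨Wc⟩ := hG.preconnected c x
  obtain ⟨b0, hAdj, hb0c⟩ := exists_nbr Wc.length Wc rfl hcx
  have hb0x : b0 ≠ x := hb0c.ne_left
  have hb0S : ((b0, (1 : Fin 2)) : V × Fin 2) ∉ Smax := fun hmem =>
    hc (b0, 1) hmem hb0x hb0c
  -- coordinates of Smax other than x are never b0-side
  have hcoord : ∀ z ∈ Smax, z.1 ≠ x → ¬ Rch G x z.1 b0 := fun z hz hzx hr =>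
    hc z hz hzx (hr.trans hb0c)
  -- Step F : the new set
  set S' : Set (V × Fin 2) := insert (b0, 1) (Smax \ {((x, 1) : V × Fin 2)}) with hS'
  have hxb0 : ((x, 1) : V × Fin 2) ≠ (b0, 1) := fun h => hb0x (congrArg Prod.fst h).symm
  have hx1S' : ((x, 1) : V × Fin 2) ∉ S' := by
    intro h
    rcases Set.mem_insert_iff.mp h with h | h
    · exact hxb0 h
    · exact h.2 rfl
  have hb0diff : ((b0, (1 : Fin 2)) : V × Fin 2) ∉ Smax \ {((x, 1) : V × Fin 2)} :=
    fun h => hb0S h.1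
  have hcard : S'.ncard = Smax.ncard := by
    rw [hS', Set.ncard_insert_of_notMem hb0diff (Set.toFinite _),
      Set.ncard_diff_singleton_add_one hx1 (Set.toFinite _)]
  -- geodesic-side contradiction helper:
  -- no geodesic between Smax-side endpoints passes through b0
  have hgeo : ∀ (u v : V), (u = x ∨ (u ≠ x ∧ ¬ Rch G x u b0)) →
      (v = x ∨ (v ≠ x ∧ ¬ Rch G x v b0)) →
      ∀ q : G.Walk u v, q.length = G.dist u v → b0 ∉ q.support := by
    intro u v hu hv q hq hb0q
    refine geo_side hG q hq hb0q hb0x ?_ ?_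
    · rcases hu with hu | ⟨hux, hu⟩
      · subst hu; exact fun W => W.start_mem_support
      · exact fun W => cross hux hb0x hu W
    · rcases hv with hv | ⟨hvx, hv⟩
      · subst hv; exact fun W => W.end_mem_support
      · exact fun W => cross hb0x hvx (fun hr => hv hr.symm) W
  -- which side Smax coordinates are on
  have sideOf : ∀ z ∈ Smax, (z.1 = x ∨ (z.1 ≠ x ∧ ¬ Rch G x z.1 b0)) := by
    intro z hz
    by_cases h : z.1 = x
    · exact Or.inl h
    · exact Or.inr ⟨h, hcoord z hz h⟩
  -- visibility between old elements
  have keyOld : ∀ z ∈ Smax \ {((x, 1) : V × Fin 2)}, ∀ w ∈ Smax \ {((x, 1) : V × Fin 2)},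
      Visible H S' z w := by
    intro z hz w hw
    obtain ⟨p, hpl, hps⟩ := hSmax z hz.1 w hw.1
    have hb0p : ((b0, (1 : Fin 2)) : V × Fin 2) ∉ p.support := by
      by_cases hce : z.1 = w.1
      · intro hmem
        have hle : p.length ≤ 1 := by
          rw [hpl]
          by_cases hzw : z = w
          · subst hzw; rw [SimpleGraph.dist_self]; omega
          · have hij : z.2 ≠ w.2 := fun h2 => hzw (Prod.ext hce h2)
            have hadj : H.Adj z w := Or.inr (Or.inl ⟨hce, P2_adj hij⟩)
            simpa using SimpleGraph.dist_le (Walk.cons hadj Walk.nil)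
        rcases support_short p hle _ hmem with h | h
        · exact hb0S (h ▸ hz.1)
        · exact hb0S (h ▸ hw.1)
      · intro hmem
        obtain ⟨q, hql, hfwd, _⟩ := proj_walk p
        have hdist : H.dist z w = G.dist z.1 w.1 := by
          simpa using H_dist hG hce z.2 w.2
        have hq : q.length = G.dist z.1 w.1 :=
          le_antisymm (le_trans hql (le_of_eq (hpl.trans hdist))) (SimpleGraph.dist_le q)
        exact hgeo z.1 w.1 (sideOf z hz.1) (sideOf w hw.1) q hq (hfwd _ hmem)
    refine ⟨p, hpl, fun v hv hvS' => ?_⟩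
    rcases Set.mem_insert_iff.mp hvS' with h | h
    · exact absurd (h ▸ hv) hb0p
    · exact hps v hv h.1
  -- visibility of the new element with old ones
  have keyNew : ∀ w ∈ Smax \ {((x, 1) : V × Fin 2)}, Visible H S' (b0, 1) w := by
    intro w hw
    by_cases hwx : w.1 = x
    · have hne : ((b0, (1 : Fin 2)) : V × Fin 2) ≠ w :=
        fun h => hb0x ((congrArg Prod.fst h).trans hwx)
      have hadj : H.Adj (b0, 1) w := by
        by_cases hlay : (1 : Fin 2) = w.2
        · exact Or.inl ⟨by rw [hwx]; exact hAdj.symm, hlay⟩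
        · exact Or.inr (Or.inr ⟨by rw [hwx]; exact hAdj.symm, P2_adj hlay⟩)
      have hd : H.dist (b0, 1) w = 1 := by
        refine le_antisymm (by simpa using SimpleGraph.dist_le (Walk.cons hadj Walk.nil)) ?_
        exact (H_conn hG).pos_dist_of_ne hne
      refine ⟨Walk.cons hadj Walk.nil, by simp [hd], fun v hv _ => ?_⟩
      rcases support_short (Walk.cons hadj Walk.nil) (by simp) v hv with h | h
      · exact Or.inl h
      · exact Or.inr h
    · have hwS : w ∈ Smax := hw.1
      have hwb0 : ¬ Rch G x w.1 b0 := hcoord w hwS hwx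
      obtain ⟨P, hPl, hPs⟩ := hSmax (x, 1) hx1 w hwS
      have hd1 : H.dist ((x, 1) : V × Fin 2) w = G.dist x w.1 := by
        simpa using H_dist hG (fun h => hwx h.symm) 1 w.2
      have hcr : ∀ W : G.Walk b0 w.1, x ∈ W.support :=
        fun W => cross hb0x hwx (fun hr => hwb0 hr.symm) W
      have hsplit : G.dist b0 w.1 = G.dist b0 x + G.dist x w.1 := dist_split hG hcr
      have hb0d : G.dist b0 x = 1 := by
        refine le_antisymm (by simpa using SimpleGraph.dist_le (Walk.cons hAdj.symm Walk.nil)) ?_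
        exact hG.pos_dist_of_ne hb0x
      have hadj1 : H.Adj ((b0, 1) : V × Fin 2) (x, 1) := Or.inl ⟨hAdj.symm, rfl⟩
      have hb0w : b0 ≠ w.1 := fun h => hwb0 (by rw [← h]; exact Rch.refl hb0x)
      have hdw : H.dist ((b0, 1) : V × Fin 2) w = G.dist b0 w.1 := by
        simpa using H_dist hG hb0w 1 w.2
      have hnbP : ((b0, (1 : Fin 2)) : V × Fin 2) ∉ P.support := by
        intro hmem
        obtain ⟨q, hql, hfwd, _⟩ := proj_walk P
        have hq : q.length = G.dist x w.1 :=
          le_antisymm (le_trans hql (le_of_eq (hPl.trans hd1))) (SimpleGraph.dist_le q)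
        exact hgeo x w.1 (Or.inl rfl) (Or.inr ⟨hwx, hwb0⟩) q hq (hfwd _ hmem)
      refine ⟨Walk.cons hadj1 P, ?_, ?_⟩
      · rw [Walk.length_cons, hPl, hd1, hdw, hsplit, hb0d]; omega
      · intro v hv hvS'
        rcases List.mem_cons.mp (by simpa using hv) with h | h
        · exact Or.inl h
        · rcases Set.mem_insert_iff.mp hvS' with h2 | h2
          · exact absurd (h2 ▸ h) hnbP
          · rcases hPs v h h2.1 with h3 | h3
            · exact absurd (Set.mem_singleton_iff.mpr h3) h2.2
            · exact Or.inr h3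
  refine ⟨S', ?_, hcard.trans hScard, ?_⟩
  · intro p1 hp1 p2 hp2
    rcases Set.mem_insert_iff.mp hp1 with h1 | h1 <;>
      rcases Set.mem_insert_iff.mp hp2 with h2 | h2
    · subst h1; subst h2
      exact ⟨Walk.nil, by simp [SimpleGraph.dist_self],
        fun v hv _ => Or.inl (by simpa using hv)⟩
    · subst h1; exact keyNew p2 h2
    · subst h2; exact visible_symm (keyNew p1 h1)
    · exact keyOld p1 h1 p2 h2
  · rintro ⟨_, h⟩
    exact hx1S' h
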